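/- The separation theorem for designs: for designs phi1, phi2 on the same base, phi1 ⊑ phi2 if and only if every counter-design orthogonal to phi1 is orthogonal to phi2 (phi1-perp ⊆ phi2-perp). -/

import Mathlib

/-! Designs of ludics, as (possibly infinitely branching) trees of alternating
positive actions `(+, ξ, I)` and negative actions `(-, ζ, J)`, with leaves
`Ω` (the partial design) and the daimon `✠`. Addresses (loci) are lists of
natural numbers (biases). -/

mutual
  inductive PosDesign : Type
    | omega : PosDesign
    | daimon : PosDesign
    | pos : List ℕ → Finset ℕ → (ℕ → NegDesign) → PosDesign
  inductive NegDesign : Type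
    | neg : (Finset ℕ → PosDesign) → NegDesign
end

def NegDesign.app : NegDesign → Finset ℕ → PosDesign
  | .neg f, J => f J

/-! The order `⊑` on designs, generated by `Ω ⊑ φ`, `φ ⊑ ✠`, congruence,
reflexivity and transitivity.  The two boolean parameters state whether the
axiom `Ω ⊑ φ` (resp. `φ ⊑ ✠`) is allowed: `LeP true true` is the observational
order `⊑`, `LeP false true` is `≤L`, and `LeP true false` is `≤R` (the stable
order). -/

mutual
  inductive LeP (o d : Bool) : PosDesign → PosDesign → Prop
    | omega (φ : PosDesign) (h : o = true) : LeP o d .omega φ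
    | daimon (φ : PosDesign) (h : d = true) : LeP o d φ .daimon
    | refl (φ : PosDesign) : LeP o d φ φ
    | trans {φ₁ φ₂ φ₃ : PosDesign} :
        LeP o d φ₁ φ₂ → LeP o d φ₂ φ₃ → LeP o d φ₁ φ₃
    | pos (ξ : List ℕ) (I : Finset ℕ) (k k' : ℕ → NegDesign)
        (h : ∀ i ∈ I, LeN o d (k i) (k' i)) : LeP o d (.pos ξ I k) (.pos ξ I k')
  inductive LeN (o d : Bool) : NegDesign → NegDesign → Prop
    | neg (f f' : Finset ℕ → PosDesign)
        (h : ∀ J, LeP o d (f J) (f' J)) : LeN o d (.neg f) (.neg f')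
end

/-! Normalization (the affine abstract machine) and orthogonality. -/

/-- The environment update in rule (R): the cut design at address `ξ` is
consumed, and its immediate subdesigns `k i` (for `i ∈ I`) are installed at the
addresses `ξ ⋆ i`. -/
def stepEnv (Ψ : List ℕ → Option NegDesign) (ξ : List ℕ) (I : Finset ℕ)
    (k : ℕ → NegDesign) : List ℕ → Option NegDesign :=
  fun ζ =>
    if ζ ≠ [] ∧ ζ.dropLast = ξ ∧ ζ.getLast! ∈ I then some (k ζ.getLast!)
    else if ζ = ξ then none else Ψ ζ

/-- `Conv φ Ψ` : the normalization of the net `⟨φ | Ψ⟩` converges, i.e. the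
weak reduction machine started on `φ` with environment `Ψ` reaches `✠`. -/
inductive Conv : PosDesign → (List ℕ → Option NegDesign) → Prop
  | dai (Ψ : List ℕ → Option NegDesign) : Conv .daimon Ψ
  | step (ξ : List ℕ) (I : Finset ℕ) (k : ℕ → NegDesign)
      (f : Finset ℕ → PosDesign) (Ψ : List ℕ → Option NegDesign)
      (h : Ψ ξ = some (.neg f)) :
      Conv (f I) (stepEnv Ψ ξ I k) → Conv (.pos ξ I k) Ψ

/-- Orthogonality of a positive design on the base `⊢ ε` and a negative design
on the base `ε ⊢`: normalization of the cut between them converges to `✠`. -/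
def orth (φ : PosDesign) (ψ : NegDesign) : Prop :=
  Conv φ (fun ζ => if ζ = [] then some ψ else none)

/-! Typing (well-formedness) of designs on a given base. -/

mutual
  /-- `WFP φ Λ` : `φ` is a design on the positive base `⊢ Λ`. -/
  inductive WFP : PosDesign → Finset (List ℕ) → Prop
    | omega (Λ : Finset (List ℕ)) : WFP .omega Λ
    | dai (Λ : Finset (List ℕ)) : WFP .daimon Λ
    | pos (ξ : List ℕ) (I : Finset ℕ) (k : ℕ → NegDesign)
        (Λ : Finset (List ℕ)) (Λi : ℕ → Finset (List ℕ))
        (hξ : ξ ∈ Λ)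
        (hsub : ∀ i ∈ I, Λi i ⊆ Λ.erase ξ)
        (hdisj : ∀ i ∈ I, ∀ j ∈ I, i ≠ j → Disjoint (Λi i) (Λi j))
        (hk : ∀ i ∈ I, WFN (k i) (ξ ++ [i]) (Λi i)) :
        WFP (.pos ξ I k) Λ
  /-- `WFN ψ ξ Λ` : `ψ` is a design on the negative base `ξ ⊢ Λ`. -/
  inductive WFN : NegDesign → List ℕ → Finset (List ℕ) → Prop
    | neg (f : Finset ℕ → PosDesign) (ξ : List ℕ) (Λ : Finset (List ℕ))
        (h : ∀ J : Finset ℕ, WFP (f J) (J.image (fun j => ξ ++ [j]) ∪ Λ)) :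
        WFN (.neg f) ξ Λ
end

mutual
  inductive LeQ : PosDesign → PosDesign → Prop
    | omega (φ : PosDesign) : LeQ .omega φ
    | daimon (φ : PosDesign) : LeQ φ .daimon
    | pos (ξ : List ℕ) (I : Finset ℕ) (k k' : ℕ → NegDesign)
        (h : ∀ i ∈ I, LeQN (k i) (k' i)) : LeQ (.pos ξ I k) (.pos ξ I k')
  inductive LeQN : NegDesign → NegDesign → Prop
    | neg (f f' : Finset ℕ → PosDesign)
        (h : ∀ J, LeQ (f J) (f' J)) : LeQN (.neg f) (.neg f')
end

theorem LeQ_refl : ∀ φ, LeQ φ φ :=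
  PosDesign.rec (motive_2 := fun ψ => LeQN ψ ψ)
    (LeQ.omega _) (LeQ.daimon _)
    (fun ξ I k ih => LeQ.pos ξ I k k (fun i _ => ih i))
    (fun f ih => LeQN.neg f f ih)

theorem LeQN_refl : ∀ ψ, LeQN ψ ψ := fun ψ => by
  cases ψ with | neg f => exact LeQN.neg f f (fun J => LeQ_refl _)

theorem LeQ_daimon_inv {φ : PosDesign} (h : LeQ .daimon φ) : φ = .daimon := by
  cases h <;> rfl

theorem LeQ_pos_inv {ξ I k} {φ₂ : PosDesign} (h : LeQ (.pos ξ I k) φ₂) :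
    φ₂ = .daimon ∨ ∃ k', φ₂ = .pos ξ I k' ∧ ∀ i ∈ I, LeQN (k i) (k' i) := by
  cases h with
  | daimon => exact Or.inl rfl
  | pos _ _ _ k' h => exact Or.inr ⟨k', rfl, h⟩

theorem LeQN_inv {f f'} (h : LeQN (.neg f) (.neg f')) : ∀ J, LeQ (f J) (f' J) := by
  cases h with | neg _ _ h => exact h
theorem LeQ_trans : ∀ φ₁ : PosDesign, ∀ {φ₂ φ₃}, LeQ φ₁ φ₂ → LeQ φ₂ φ₃ → LeQ φ₁ φ₃ := by
  refine PosDesign.rec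
    (motive_1 := fun φ₁ => ∀ {φ₂ φ₃}, LeQ φ₁ φ₂ → LeQ φ₂ φ₃ → LeQ φ₁ φ₃)
    (motive_2 := fun ψ₁ => ∀ {ψ₂ ψ₃}, LeQN ψ₁ ψ₂ → LeQN ψ₂ ψ₃ → LeQN ψ₁ ψ₃)
    ?_ ?_ ?_ ?_
  · intro φ₂ φ₃ _ _; exact LeQ.omega _
  · intro φ₂ φ₃ h12 h23
    obtain rfl := LeQ_daimon_inv h12
    obtain rfl := LeQ_daimon_inv h23
    exact LeQ.daimon _
  · intro ξ I k ih φ₂ φ₃ h12 h23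
    rcases LeQ_pos_inv h12 with rfl | ⟨k', rfl, hk⟩
    · obtain rfl := LeQ_daimon_inv h23; exact LeQ.daimon _
    · rcases LeQ_pos_inv h23 with rfl | ⟨k'', rfl, hk'⟩
      · exact LeQ.daimon _
      · exact LeQ.pos ξ I k k'' (fun i hi => ih i (hk i hi) (hk' i hi))
  · intro f ih ψ₂ ψ₃ h12 h23
    cases ψ₂ with | neg f₂ => cases ψ₃ with | neg f₃ =>
    exact LeQN.neg _ _ (fun J => ih J (LeQN_inv h12 J) (LeQN_inv h23 J))

theorem LeP_to_LeQ {φ₁ φ₂ : PosDesign} (h : LeP true true φ₁ φ₂) : LeQ φ₁ φ₂ :=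
  LeP.rec (motive_1 := fun a b _ => LeQ a b) (motive_2 := fun a b _ => LeQN a b)
    (fun φ _ => LeQ.omega φ) (fun φ _ => LeQ.daimon φ)
    (fun φ => LeQ_refl φ)
    (fun _ _ ih1 ih2 => LeQ_trans _ ih1 ih2)
    (fun ξ I k k' _ ih => LeQ.pos ξ I k k' ih)
    (fun f f' _ ih => LeQN.neg f f' ih) h

theorem LeQ_to_LeP {φ₁ φ₂ : PosDesign} (h : LeQ φ₁ φ₂) : LeP true true φ₁ φ₂ :=
  LeQ.rec (motive_1 := fun a b _ => LeP true true a b)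
    (motive_2 := fun a b _ => LeN true true a b)
    (fun φ => LeP.omega φ rfl) (fun φ => LeP.daimon φ rfl)
    (fun ξ I k k' _ ih => LeP.pos ξ I k k' ih)
    (fun f f' _ ih => LeN.neg f f' ih) h

/-- Environment relatedness for monotonicity. -/
def EnvRel (Ψ₁ Ψ₂ : List ℕ → Option NegDesign) : Prop :=
  ∀ ζ ψ, Ψ₁ ζ = some ψ → ∃ ψ', Ψ₂ ζ = some ψ' ∧ LeQN ψ ψ'

theorem EnvRel_step {Ψ₁ Ψ₂ : List ℕ → Option NegDesign} (h : EnvRel Ψ₁ Ψ₂)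
    (ξ : List ℕ) (I : Finset ℕ) {k k' : ℕ → NegDesign}
    (hk : ∀ i ∈ I, LeQN (k i) (k' i)) :
    EnvRel (stepEnv Ψ₁ ξ I k) (stepEnv Ψ₂ ξ I k') := by
  intro ζ ψ hψ
  unfold stepEnv at *
  by_cases h1 : ζ ≠ [] ∧ ζ.dropLast = ξ ∧ ζ.getLast! ∈ I
  · rw [if_pos h1] at hψ ⊢
    exact ⟨k' ζ.getLast!, rfl, by cases hψ; exact hk _ h1.2.2⟩
  · rw [if_neg h1] at hψ ⊢
    by_cases h2 : ζ = ξ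
    · rw [if_pos h2] at hψ; cases hψ
    · rw [if_neg h2] at hψ ⊢; exact h ζ ψ hψ

theorem Conv_mono : ∀ {φ₁ Ψ₁}, Conv φ₁ Ψ₁ → ∀ {φ₂ Ψ₂}, LeQ φ₁ φ₂ → EnvRel Ψ₁ Ψ₂ →
    Conv φ₂ Ψ₂ := by
  intro φ₁ Ψ₁ h
  induction h with
  | dai Ψ =>
    intro φ₂ Ψ₂ h12 _
    obtain rfl := LeQ_daimon_inv h12
    exact Conv.dai _
  | step ξ I k f Ψ hΨ hc ih =>
    intro φ₂ Ψ₂ h12 hrel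
    rcases LeQ_pos_inv h12 with rfl | ⟨k', rfl, hk⟩
    · exact Conv.dai _
    · obtain ⟨ψ', hψ', hle⟩ := hrel ξ _ hΨ
      cases ψ' with | neg f' =>
      exact Conv.step ξ I k' f' Ψ₂ hψ'
        (ih (LeQN_inv hle I) (EnvRel_step hrel ξ I hk))
/-- Antichain of addresses: no address in `Λ` is a proper prefix of another. -/
def AChain (Λ : Finset (List ℕ)) : Prop :=
  ∀ a ∈ Λ, ∀ b ∈ Λ, a <+: b → a = b

theorem getLast!_concat' (l : List ℕ) (a : ℕ) : (l ++ [a]).getLast! = a := by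
  have h : (l ++ [a]).getLast? = some a := List.getLast?_concat
  have h2 : (l ++ [a]).getLast! = ((l ++ [a]).getLast?).iget := by
    cases hl : l ++ [a] with
    | nil => simp at hl
    | cons x xs => simp [List.getLast!, List.getLast?_eq_getLast]
  rw [h2, h]

theorem stepEnv_eq_of_not_prefix {σ ζ : List ℕ} (h : ¬ σ <+: ζ)
    (Ψ : List ℕ → Option NegDesign) (I : Finset ℕ) (m : ℕ → NegDesign) :
    stepEnv Ψ σ I m ζ = Ψ ζ := by
  unfold stepEnv
  rw [if_neg, if_neg]
  · intro he; exact h (he ▸ List.prefix_refl ζ)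
  · rintro ⟨h0, h1, h2⟩; exact h (h1 ▸ List.dropLast_prefix ζ)

theorem stepEnv_concat (Ψ : List ℕ → Option NegDesign) (σ : List ℕ)
    (I : Finset ℕ) (m : ℕ → NegDesign) {j : ℕ} (hj : j ∈ I) :
    stepEnv Ψ σ I m (σ ++ [j]) = some (m j) := by
  unfold stepEnv
  rw [if_pos ⟨by simp, List.dropLast_concat, by rw [getLast!_concat']; exact hj⟩,
    getLast!_concat']

theorem WFP_mono {φ : PosDesign} {Λ Λ' : Finset (List ℕ)} (hs : Λ ⊆ Λ')
    (h : WFP φ Λ) : WFP φ Λ' := by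
  cases h with
  | omega => exact .omega _
  | dai => exact .dai _
  | pos ξ I k _Λ Λi hξ hsub hdisj hk =>
    exact .pos ξ I k Λ' Λi (hs hξ)
      (fun i hi => (hsub i hi).trans (Finset.erase_subset_erase _ hs)) hdisj hk
theorem AChain_singleton : AChain {([] : List ℕ)} := by
  intro a ha b hb _
  simp only [Finset.mem_singleton] at ha hb
  rw [ha, hb]

theorem AChain_not_prefix {Λ : Finset (List ℕ)} (hAC : AChain Λ) {ξ ζ : List ℕ}
    (hξ : ξ ∈ Λ) (hζ : ζ ∈ Λ) (hne : ζ ≠ ξ) : ¬ ξ <+: ζ :=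
  fun h => hne (hAC ξ hξ ζ hζ h).symm

theorem AChain_step {Λ : Finset (List ℕ)} (hAC : AChain Λ) {ξ σ : List ℕ}
    (hξ : ξ ∈ Λ) (hσ : ξ <+: σ) (J : Finset ℕ) :
    AChain (J.image (fun j => σ ++ [j]) ∪ Λ.erase ξ) := by
  intro a ha b hb hab
  simp only [Finset.mem_union, Finset.mem_image, Finset.mem_erase] at ha hb
  rcases ha with ⟨j, hj, rfl⟩ | ⟨hane, haΛ⟩
  · rcases hb with ⟨j', hj', rfl⟩ | ⟨hbne, hbΛ⟩
    · exact hab.eq_of_length (by simp)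
    · have hpre : ξ <+: b := ((hσ.trans (List.prefix_append σ [j])).trans hab)
      exact absurd (hAC ξ hξ b hbΛ hpre).symm hbne
  · rcases hb with ⟨j', hj', rfl⟩ | ⟨hbne, hbΛ⟩
    · have hξb : ξ <+: σ ++ [j'] := hσ.trans (List.prefix_append σ [j'])
      rcases List.prefix_or_prefix_of_prefix hab hξb with h | h
      · exact absurd (hAC a haΛ ξ hξ h) hane
      · exact absurd (hAC ξ hξ a haΛ h).symm hane
    · exact hAC a haΛ b hbΛ hab

/-- The main separation construction, stated as a motive for structural
recursion on the first design. -/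
def SepMot (φ₁ : PosDesign) : Prop :=
  ∀ (φ₂ : PosDesign) (Λ : Finset (List ℕ)), AChain Λ → WFP φ₁ Λ → WFP φ₂ Λ →
    ¬ LeQ φ₁ φ₂ →
    ∃ Θ : List ℕ → NegDesign, (∀ ζ, WFN (Θ ζ) ζ ∅) ∧
      (∀ Ψ, (∀ ζ ∈ Λ, Ψ ζ = some (Θ ζ)) → Conv φ₁ Ψ) ∧
      (∀ Ψ, (∀ ζ ∈ Λ, Ψ ζ = some (Θ ζ)) → ¬ Conv φ₂ Ψ)

theorem sepOmega : SepMot .omega :=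
  fun _ _ _ _ _ hn => absurd (LeQ.omega _) hn

theorem sepDaimon : SepMot .daimon := by
  intro φ₂ Λ hAC h1 h2 hn
  cases φ₂ with
  | daimon => exact absurd (LeQ.daimon _) hn
  | omega =>
    exact ⟨fun _ => .neg (fun _ => .daimon),
      fun ζ => WFN.neg _ _ _ (fun J => .dai _),
      fun Ψ _ => Conv.dai Ψ, fun Ψ _ h => by cases h⟩
  | pos ξ I' k' =>
    cases h2 with
    | pos _ _ _ _ Λi hξ hsub hdisj hk =>
    refine ⟨fun _ => .neg (fun _ => .omega),
      fun ζ => WFN.neg _ _ _ (fun J => .omega _),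
      fun Ψ _ => Conv.dai Ψ, ?_⟩
    intro Ψ hag hcv
    cases hcv with
    | step _ _ _ f _ hΨ hc =>
      rw [hag ξ hξ] at hΨ
      injection hΨ with hΨ
      injection hΨ with hΨ
      rw [← hΨ] at hc
      cases hc
theorem sepPos (ξ : List ℕ) (I : Finset ℕ) (k : ℕ → NegDesign)
    (ih : ∀ i J, SepMot ((k i).app J)) : SepMot (.pos ξ I k) := by
  intro φ₂ Λ hAC h1 h2 hn
  cases h1 with
  | pos _ _ _ _ Λi hξ hsub hdisj hk =>
  cases φ₂ with
  | daimon => exact absurd (LeQ.daimon _) hn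
  | omega =>
    refine ⟨fun _ => .neg (fun _ => .daimon),
      fun ζ => WFN.neg _ _ _ (fun J => .dai _), ?_, fun Ψ _ h => by cases h⟩
    intro Ψ hag
    exact Conv.step ξ I k (fun _ => .daimon) Ψ (hag ξ hξ) (Conv.dai _)
  | pos ξ' I' k' =>
    cases h2 with
    | pos _ _ _ _ Λi' hξ' hsub' hdisj' hk' =>
    by_cases hxx : ξ = ξ' ∧ I = I'
    · obtain ⟨hx1, hx2⟩ := hxx
      subst hx1; subst hx2
      -- same head action: some immediate subdesign must differ
      have hex : ∃ i ∈ I, ¬ LeQN (k i) (k' i) := by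
        by_contra hc
        push_neg at hc
        exact hn (LeQ.pos ξ I k k' hc)
      obtain ⟨i₀, hi₀, hni⟩ := hex
      cases hgk : k i₀ with | neg g =>
      cases hgk' : k' i₀ with | neg g' =>
      have hexJ : ∃ J, ¬ LeQ (g J) (g' J) := by
        by_contra hc
        push_neg at hc
        refine hni ?_
        rw [hgk, hgk']
        exact LeQN.neg g g' hc
      obtain ⟨J, hJ⟩ := hexJ
      have hξσ : ξ <+: ξ ++ [i₀] := List.prefix_append ξ [i₀]
      set σ : List ℕ := ξ ++ [i₀] with hσdef
      set Λn : Finset (List ℕ) := J.image (fun j => σ ++ [j]) ∪ Λ.erase ξ with hΛndef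
      have hACn : AChain Λn := AChain_step hAC hξ hξσ J
      have hWg : WFP (g J) Λn := by
        have hw := hk i₀ hi₀
        rw [hgk] at hw
        cases hw with
        | neg _ _ _ hwf =>
          exact WFP_mono (Finset.union_subset_union (Finset.Subset.refl _)
            (hsub i₀ hi₀)) (hwf J)
      have hWg' : WFP (g' J) Λn := by
        have hw := hk' i₀ hi₀
        rw [hgk'] at hw
        cases hw with
        | neg _ _ _ hwf =>
          exact WFP_mono (Finset.union_subset_union (Finset.Subset.refl _)
            (hsub' i₀ hi₀)) (hwf J)
      have hmot : SepMot (g J) := by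
        have := ih i₀ J
        rw [hgk] at this
        exact this
      obtain ⟨Θ', hTWF, hTc, hTn⟩ := hmot (g' J) Λn hACn hWg hWg' hJ
      set m : ℕ → NegDesign := fun j => Θ' (σ ++ [j]) with hmdef
      set f₀ : Finset ℕ → PosDesign :=
        fun K => if K = I then .pos σ J m else .daimon with hf₀def
      have hfI : f₀ I = .pos σ J m := if_pos rfl
      set Θ : List ℕ → NegDesign :=
        fun ζ => if ζ = ξ then .neg f₀ else Θ' ζ with hΘdef
      have hΘξ : Θ ξ = .neg f₀ := if_pos rfl
      have hΘne : ∀ ζ, ζ ≠ ξ → Θ ζ = Θ' ζ := fun ζ h => if_neg h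
      -- the key environment computation, for both runs
      have hagree2 : ∀ (Ψ : List ℕ → Option NegDesign),
          (∀ ζ ∈ Λ, Ψ ζ = some (Θ ζ)) → ∀ (kk : ℕ → NegDesign),
          ∀ ζ ∈ Λn, stepEnv (stepEnv Ψ ξ I kk) σ J m ζ = some (Θ' ζ) := by
        intro Ψ hag kk ζ hζ
        rcases Finset.mem_union.mp hζ with hζ1 | hζ2
        · obtain ⟨j, hj, rfl⟩ := Finset.mem_image.mp hζ1
          rw [stepEnv_concat _ _ _ _ hj]
        · obtain ⟨hζne, hζΛ⟩ := Finset.mem_erase.mp hζ2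
          have hnp : ¬ ξ <+: ζ := AChain_not_prefix hAC hξ hζΛ hζne
          have h1 : ¬ σ <+: ζ := fun h => hnp (hξσ.trans h)
          rw [stepEnv_eq_of_not_prefix h1, stepEnv_eq_of_not_prefix hnp,
            hag ζ hζΛ, hΘne ζ hζne]
      refine ⟨Θ, ?_, ?_, ?_⟩
      · -- well-formedness of the counter-designs
        intro ζ
        by_cases hζ : ζ = ξ
        · subst hζ
          rw [hΘξ]
          refine WFN.neg _ _ _ (fun K => ?_)
          by_cases hK : K = I
          · subst hK
            rw [hfI]
            refine WFP.pos σ J m _ (fun _ => ∅)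
              (Finset.mem_union_left _ (Finset.mem_image.mpr ⟨i₀, hi₀, rfl⟩))
              (fun _ _ => Finset.empty_subset _)
              (fun _ _ _ _ _ => Finset.disjoint_empty_left _)
              (fun j _ => hTWF (σ ++ [j]))
          · rw [hf₀def]
            simp only [if_neg hK]
            exact WFP.dai _
        · rw [hΘne ζ hζ]; exact hTWF ζ
      · -- convergence against φ₁
        intro Ψ hag
        have hΨξ : Ψ ξ = some (.neg f₀) := by rw [hag ξ hξ, hΘξ]
        refine Conv.step ξ I k f₀ Ψ hΨξ ?_
        rw [hfI]
        have hE : stepEnv Ψ ξ I k σ = some (.neg g) := by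
          rw [hσdef, stepEnv_concat Ψ ξ I k hi₀, hgk]
        refine Conv.step σ J m g (stepEnv Ψ ξ I k) hE ?_
        exact hTc _ (hagree2 Ψ hag k)
      · -- divergence against φ₂
        intro Ψ hag hcv
        cases hcv with
        | step _ _ _ f₂ _ hΨ₂ hc₂ =>
          rw [hag ξ hξ, hΘξ] at hΨ₂
          injection hΨ₂ with hΨ₂
          injection hΨ₂ with hΨ₂
          rw [← hΨ₂, hfI] at hc₂
          cases hc₂ with
          | step _ _ _ g₂ _ hE₂ hc₃ =>
            rw [hσdef, stepEnv_concat Ψ ξ I k' hi₀, hgk'] at hE₂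
            injection hE₂ with hE₂
            injection hE₂ with hE₂
            rw [← hE₂] at hc₃
            exact hTn _ (hagree2 Ψ hag k') hc₃
    · -- the head actions differ
      refine ⟨fun ζ => .neg (fun K => if ζ = ξ ∧ K = I then .daimon else .omega),
        ?_, ?_, ?_⟩
      · intro ζ
        refine WFN.neg _ _ _ (fun K => ?_)
        by_cases h : ζ = ξ ∧ K = I
        · rw [if_pos h]; exact .dai _
        · rw [if_neg h]; exact .omega _
      · intro Ψ hag
        refine Conv.step ξ I k _ Ψ (hag ξ hξ) ?_
        show Conv (if ξ = ξ ∧ I = I then PosDesign.daimon else .omega) _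
        rw [if_pos ⟨rfl, rfl⟩]
        exact Conv.dai _
      · intro Ψ hag hcv
        cases hcv with
        | step _ _ _ f₂ _ hΨ₂ hc₂ =>
          rw [hag ξ' hξ'] at hΨ₂
          injection hΨ₂ with hΨ₂
          injection hΨ₂ with hΨ₂
          rw [← hΨ₂] at hc₂
          have : (if ξ' = ξ ∧ I' = I then PosDesign.daimon else .omega) = .omega := by
            rw [if_neg]
            rintro ⟨rfl, rfl⟩
            exact hxx ⟨rfl, rfl⟩
          rw [show ((fun K => if ξ' = ξ ∧ K = I then PosDesign.daimon else .omega) I')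
              = PosDesign.omega from this] at hc₂
          cases hc₂

theorem sepMain : ∀ φ₁, SepMot φ₁ :=
  PosDesign.rec (motive_1 := SepMot)
    (motive_2 := fun ψ => ∀ J, SepMot (ψ.app J))
    sepOmega sepDaimon sepPos (fun f ihf J => ihf J)

/-- the separation theorem. For designs `φ₁`, `φ₂` on the same
base `⊢ ε` (here `ε = []`), `φ₁ ⊑ φ₂` if and only if every counter-design
orthogonal to `φ₁` is orthogonal to `φ₂`. -/
theorem separation (φ₁ φ₂ : PosDesign)
    (h₁ : WFP φ₁ {([] : List ℕ)}) (h₂ : WFP φ₂ {([] : List ℕ)}) :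
    LeP true true φ₁ φ₂ ↔
      ∀ ψ : NegDesign, WFN ψ [] ∅ → orth φ₁ ψ → orth φ₂ ψ := by
  constructor
  · intro h ψ _ ho
    exact Conv_mono ho (LeP_to_LeQ h)
      (fun ζ ψ' hψ' => ⟨ψ', hψ', by
        by_cases hζ : ζ = [] <;> simp [hζ] at hψ' ⊢
        · rw [← hψ']; exact LeQN_refl _⟩)
  · intro h
    by_contra hne
    have hnq : ¬ LeQ φ₁ φ₂ := fun hq => hne (LeQ_to_LeP hq)
    obtain ⟨Θ, hWF, hc, hnc⟩ := sepMain φ₁ φ₂ {([] : List ℕ)}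
      AChain_singleton h₁ h₂ hnq
    have hag : ∀ ζ ∈ ({([] : List ℕ)} : Finset (List ℕ)),
        (fun ζ => if ζ = [] then some (Θ []) else none) ζ = some (Θ ζ) := by
      intro ζ hζ
      simp only [Finset.mem_singleton] at hζ
      subst hζ
      rfl
    exact hnc _ hag (h (Θ []) (hWF []) (hc _ hag))
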